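/- There exists a constant C > 0 such that for every α ∈ (0, √2] and every h ∈ L²(ℝ) with ‖h‖_{L²(ℝ)} < α/C, the map w₀ ↦ S_h w₀ sends the ball B_α := {w ∈ H¹(ℝ): ‖w‖_{H¹(ℝ)} ≤ α} into itself. -/

import Mathlib

open MeasureTheory Real

/-- The solution operator `S_h w₀ (s) := ∫₀ˢ exp(−∫ₜˢ (2·tanh τ + w₀ τ) dτ)·h(t) dt`,
i.e. the solution of `w₁′ = −(2·tanh + w₀)·w₁ + h`, `w₁(0) = 0`. -/
noncomputable def Sop (h w₀ : ℝ → ℝ) (s : ℝ) : ℝ :=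
  ∫ t in (0 : ℝ)..s, Real.exp (-(∫ τ in t..s, (2 * Real.tanh τ + w₀ τ))) * h t

/-- The `H¹(ℝ)` norm `(‖w‖²_{L²} + ‖w′‖²_{L²})^{1/2}`. -/
noncomputable def H1norm (w : ℝ → ℝ) : ℝ :=
  Real.sqrt ((∫ t : ℝ, (w t) ^ 2) + ∫ t : ℝ, (deriv w t) ^ 2)

/-- The `L²(ℝ)` norm. -/
noncomputable def L2norm (h : ℝ → ℝ) : ℝ :=
  Real.sqrt (∫ t : ℝ, (h t) ^ 2)

open Set Filter Metric Topology

section Aux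

/-- Lebesgue differentiation: the primitive of a locally integrable function is a.e.
differentiable with derivative the function itself. -/
lemma ae_hasDerivAt_primitive {g : ℝ → ℝ} (hg : LocallyIntegrable g volume) :
    ∀ᵐ x : ℝ, HasDerivAt (fun y => ∫ t in (0:ℝ)..y, g t) (g x) x := by
  have hint : ∀ a b : ℝ, IntervalIntegrable g volume a b := fun a b =>
    (hg.integrableOn_isCompact isCompact_uIcc).intervalIntegrable
  filter_upwards [IsUnifLocDoublingMeasure.ae_tendsto_average_norm_sub (μ := volume) hg 2]
    with x hx
  rw [hasDerivAt_iff_tendsto_slope]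
  have key : Tendsto (fun y : ℝ => ⨍ t in closedBall ((x + y)/2) (|y - x|/2), ‖g t - g x‖)
      (𝓝[≠] x) (𝓝 0) := by
    apply hx (fun y => (x + y)/2) (fun y => |y - x|/2)
    · rw [tendsto_nhdsWithin_iff]
      constructor
      · have : Tendsto (fun y : ℝ => |y - x|/2) (𝓝 x) (𝓝 (|x - x|/2)) :=
          (((continuous_id.sub continuous_const).abs.div_const 2).tendsto x)
        simpa using this.mono_left nhdsWithin_le_nhds
      · filter_upwards [self_mem_nhdsWithin] with y (hy : y ≠ x)
        have h1 : y - x ≠ 0 := sub_ne_zero.2 hy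
        have h2 : 0 < |y - x| := abs_pos.2 h1
        exact mem_Ioi.2 (by linarith)
    · filter_upwards with y
      rw [mem_closedBall, Real.dist_eq]
      have h3 : x - (x + y)/2 = (x - y)/2 := by ring
      rw [h3, abs_div, abs_sub_comm x y]
      rw [abs_of_nonneg (by norm_num : (0:ℝ) ≤ 2)]
      nlinarith [abs_nonneg (y - x)]
  rw [← tendsto_sub_nhds_zero_iff]
  apply squeeze_zero_norm' _ key
  filter_upwards [self_mem_nhdsWithin] with y (hy : y ≠ x)
  have hyx : y - x ≠ 0 := sub_ne_zero.2 hy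
  have habs : 0 < |y - x| := abs_pos.2 hyx
  have hIcc : closedBall ((x + y)/2) (|y - x|/2) = uIcc x y := by
    rw [Real.closedBall_eq_Icc, uIcc]
    rcases le_total x y with h | h
    · rw [abs_of_nonneg (by linarith)]
      rw [min_eq_left h, max_eq_right h]
      congr 1 <;> ring
    · rw [abs_of_nonpos (by linarith)]
      rw [min_eq_right h, max_eq_left h]
      congr 1 <;> ring
  have hvol : (volume (uIcc x y)).toReal = |y - x| := by
    rw [uIcc, Real.volume_Icc, ENNReal.toReal_ofReal (by
      rcases le_total x y with h|h <;>
        simp [min_eq_left, max_eq_right, min_eq_right, max_eq_left, h])]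
    rcases le_total x y with h | h
    · rw [min_eq_left h, max_eq_right h, abs_of_nonneg (by linarith)]
    · rw [min_eq_right h, max_eq_left h, abs_of_nonpos (by linarith)]; ring
  have hslope : slope (fun y => ∫ t in (0:ℝ)..y, g t) x y - g x
      = (∫ t in x..y, (g t - g x)) / (y - x) := by
    rw [slope_def_field]
    have h1 : (∫ t in (0:ℝ)..y, g t) - (∫ t in (0:ℝ)..x, g t) = ∫ t in x..y, g t := by
      rw [← intervalIntegral.integral_add_adjacent_intervals (hint 0 x) (hint x y)]
      ring
    have h2 : ∫ t in x..y, (g t - g x) = (∫ t in x..y, g t) - (y - x) * g x := by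
      rw [intervalIntegral.integral_sub (hint x y) intervalIntegrable_const]
      simp [intervalIntegral.integral_const, smul_eq_mul]
    rw [h2, h1]
    field_simp
  rw [hslope, hIcc, setAverage_eq, measureReal_def, hvol]
  rw [norm_div, Real.norm_eq_abs, Real.norm_eq_abs]
  rw [div_le_iff₀ habs, smul_eq_mul]
  have hmono : ∫ t in Set.uIoc x y, ‖g t - g x‖ ≤ ∫ t in uIcc x y, ‖g t - g x‖ := by
    apply setIntegral_mono_set
    · exact ((hg.integrableOn_isCompact isCompact_uIcc).sub
        (integrableOn_const (by rw [uIcc, Real.volume_Icc]; exact ENNReal.ofReal_ne_top))).norm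
    · filter_upwards with t using norm_nonneg _
    · exact Filter.Eventually.of_forall Ioc_subset_Icc_self
  calc |∫ t in x..y, (g t - g x)| ≤ ∫ t in Set.uIoc x y, ‖g t - g x‖ := by
        rw [← Real.norm_eq_abs]
        exact intervalIntegral.norm_integral_le_integral_norm_uIoc
    _ ≤ ∫ t in uIcc x y, ‖g t - g x‖ := hmono
    _ = |y - x|⁻¹ * (∫ t in uIcc x y, ‖g t - g x‖) * |y - x| := by
        field_simp

lemma locallyIntegrable_continuous_mul {c f : ℝ → ℝ} (hc : Continuous c)
    (hf : LocallyIntegrable f volume) : LocallyIntegrable (fun t => c t * f t) volume := by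
  rw [MeasureTheory.locallyIntegrable_iff]
  intro K hK
  exact (hf.integrableOn_isCompact hK).continuousOn_mul hc.continuousOn hK

lemma integrable_exp_neg_abs : Integrable (fun t : ℝ => Real.exp (-|t|)) := by
  have h1 : IntegrableOn (fun t : ℝ => Real.exp (-|t|)) (Ioi 0) volume := by
    apply (exp_neg_integrableOn_Ioi 0 one_pos).congr_fun ?_ measurableSet_Ioi
    intro t ht
    simp [abs_of_pos (Set.mem_Ioi.mp ht)]
  have h2 : IntegrableOn (fun t : ℝ => Real.exp (-|t|)) (Iic 0) volume := by
    apply (integrableOn_exp_Iic 0).congr_fun ?_ measurableSet_Iic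
    intro t ht
    simp [abs_of_nonpos (Set.mem_Iic.mp ht)]
  have := h2.union h1
  rwa [Iic_union_Ioi, integrableOn_univ] at this

lemma integral_exp_neg_abs : ∫ t : ℝ, Real.exp (-|t|) = 2 := by
  have h1 : IntegrableOn (fun t : ℝ => Real.exp (-|t|)) (Ioi 0) volume :=
    integrable_exp_neg_abs.integrableOn
  have h2 : IntegrableOn (fun t : ℝ => Real.exp (-|t|)) (Iic 0) volume :=
    integrable_exp_neg_abs.integrableOn
  have hsplit : ∫ t : ℝ, Real.exp (-|t|)
      = (∫ t in Iic (0:ℝ), Real.exp (-|t|)) + ∫ t in Ioi (0:ℝ), Real.exp (-|t|) := by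
    rw [← setIntegral_univ (f := fun t : ℝ => Real.exp (-|t|)), ← Iic_union_Ioi (a := (0:ℝ))]
    exact setIntegral_union (Iic_disjoint_Ioi le_rfl) measurableSet_Ioi h2 h1
  have e1 : ∫ t in Iic (0:ℝ), Real.exp (-|t|) = 1 := by
    rw [setIntegral_congr_fun measurableSet_Iic (g := Real.exp)
      (fun t (ht : t ≤ 0) => by simp [abs_of_nonpos ht])]
    simpa using integral_exp_Iic 0
  have e2 : ∫ t in Ioi (0:ℝ), Real.exp (-|t|) = 1 := by
    rw [setIntegral_congr_fun measurableSet_Ioi (g := fun t => Real.exp (-t))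
      (fun t (ht : 0 < t) => by simp [abs_of_pos ht])]
    exact integral_exp_neg_Ioi_zero
  rw [hsplit, e1, e2]; norm_num

end Aux

set_option maxHeartbeats 1000000 in
/-- There is a constant `C > 0` such that for every `α ∈ (0, √2]` and every
`h ∈ L²(ℝ)` with `‖h‖_{L²(ℝ)} < α/C`, the map `w₀ ↦ S_h w₀` sends the `H¹(ℝ)`-ball
`B_α = {w : ‖w‖_{H¹(ℝ)} ≤ α}` into itself. -/
theorem Sop_ball_stability :
    ∃ C > 0, ∀ α : ℝ, α ∈ Set.Ioc (0 : ℝ) (Real.sqrt 2) →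
      ∀ h : ℝ → ℝ, MemLp h 2 (volume : Measure ℝ) → L2norm h < α / C →
      ∀ w₀ : ℝ → ℝ,
        Differentiable ℝ w₀ →
        MemLp w₀ 2 (volume : Measure ℝ) →
        MemLp (deriv w₀) 2 (volume : Measure ℝ) →
        H1norm w₀ ≤ α →
        (MemLp (Sop h w₀) 2 (volume : Measure ℝ) ∧
         MemLp (deriv (Sop h w₀)) 2 (volume : Measure ℝ) ∧
         H1norm (Sop h w₀) ≤ α) := by
  classical
  refine ⟨36 * Real.exp 1, by positivity, ?_⟩
  intro α hα h hh hhN w₀ hw₀d hw₀2 hw₀d2 hw₀α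
  obtain ⟨hα0, hα2⟩ := hα
  set C : ℝ := 36 * Real.exp 1 with hCdef
  have hC : (0:ℝ) < C := by positivity
  set N : ℝ := L2norm h with hNdef
  have hN0 : 0 ≤ N := Real.sqrt_nonneg _
  have hsq : Integrable (fun t => h t ^ 2) volume := hh.integrable_sq
  have hinth2 : ∫ t : ℝ, h t ^ 2 = N ^ 2 := by
    rw [hNdef, L2norm, Real.sq_sqrt (integral_nonneg fun t => sq_nonneg _)]
  by_cases hNz : N = 0
  · -- degenerate case : h = 0 a.e., so Sop h w₀ = 0
    have hh0 : h =ᵐ[volume] 0 := by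
      have h2 : (fun t => h t ^ 2) =ᵐ[volume] 0 := by
        rw [← integral_eq_zero_iff_of_nonneg (fun t => sq_nonneg _) hsq, hinth2, hNz]
        norm_num
      filter_upwards [h2] with t ht
      simpa using pow_eq_zero_iff (n := 2) (by norm_num) |>.mp (by simpa using ht)
    have hS0 : Sop h w₀ = fun _ => (0:ℝ) := by
      funext s
      unfold Sop
      have hz : ∀ᵐ t ∂(volume : Measure ℝ), t ∈ Set.uIoc 0 s →
          Real.exp (-(∫ τ in t..s, (2 * Real.tanh τ + w₀ τ))) * h t = 0 := by
        filter_upwards [hh0] with t ht _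
        simp [ht]
      rw [intervalIntegral.integral_congr_ae hz]
      simp
    rw [hS0]
    have hd : deriv (fun _ : ℝ => (0:ℝ)) = fun _ => (0:ℝ) := by
      funext x; simp
    refine ⟨MemLp.zero', ?_, ?_⟩
    · rw [hd]; exact MemLp.zero'
    · unfold H1norm
      rw [hd]
      simpa using hα0.le
  have hNpos : 0 < N := lt_of_le_of_ne hN0 (Ne.symm hNz)
  set M : ℝ := 4 * Real.exp 1 with hMdef
  have hM1 : (1:ℝ) ≤ M := by
    rw [hMdef]; nlinarith [Real.exp_one_gt_d9]
  have hM0 : (0:ℝ) < M := lt_of_lt_of_le one_pos hM1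
  have htanh_cont : Continuous Real.tanh := by
    have ht : Real.tanh = fun x => Real.sinh x / Real.cosh x := funext Real.tanh_eq_sinh_div_cosh
    rw [ht]
    exact Real.continuous_sinh.div Real.continuous_cosh fun x => (Real.cosh_pos x).ne'
  have ha : Continuous (fun τ => 2 * Real.tanh τ + w₀ τ) :=
    (continuous_const.mul htanh_cont).add hw₀d.continuous
  set a : ℝ → ℝ := fun τ => 2 * Real.tanh τ + w₀ τ with hadef
  set A : ℝ → ℝ := fun s => ∫ τ in (0:ℝ)..s, a τ with hAdef
  have hAder : ∀ s, HasDerivAt A (a s) s := by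
    intro s
    have hmeas : StronglyMeasurableAtFilter a (nhds s) volume :=
      ha.stronglyMeasurableAtFilter volume (nhds s)
    exact intervalIntegral.integral_hasDerivAt_right (ha.intervalIntegrable 0 s)
      hmeas ha.continuousAt
  have hAdiff : Differentiable ℝ A := fun s => (hAder s).differentiableAt
  have hAcont : Continuous A := hAdiff.continuous
  have hsplit : ∀ t s : ℝ, (∫ τ in t..s, a τ) = A s - A t := by
    intro t s
    have hadd := intervalIntegral.integral_add_adjacent_intervals
      (ha.intervalIntegrable (μ := volume) 0 t) (ha.intervalIntegrable (μ := volume) t s)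
    simp only [hAdef]
    linarith
  -- L² mass of w₀
  have hw₀sq : Integrable (fun t => w₀ t ^ 2) volume := hw₀2.integrable_sq
  have hw₀L2 : ∫ t : ℝ, w₀ t ^ 2 ≤ 2 := by
    have h1 : 0 ≤ ∫ t : ℝ, w₀ t ^ 2 := integral_nonneg fun t => sq_nonneg _
    have h2 : 0 ≤ ∫ t : ℝ, deriv w₀ t ^ 2 := integral_nonneg fun t => sq_nonneg _
    have h3 : Real.sqrt ((∫ t : ℝ, w₀ t ^ 2) + ∫ t : ℝ, deriv w₀ t ^ 2) ≤ Real.sqrt 2 :=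
      le_trans hw₀α hα2
    have h4 : (∫ t : ℝ, w₀ t ^ 2) + ∫ t : ℝ, deriv w₀ t ^ 2 ≤ 2 := by
      calc (∫ t : ℝ, w₀ t ^ 2) + ∫ t : ℝ, deriv w₀ t ^ 2
          = Real.sqrt ((∫ t : ℝ, w₀ t ^ 2) + ∫ t : ℝ, deriv w₀ t ^ 2) ^ 2 :=
            (Real.sq_sqrt (by linarith)).symm
        _ ≤ Real.sqrt 2 ^ 2 := by
            apply pow_le_pow_left₀ (Real.sqrt_nonneg _) h3
        _ = 2 := Real.sq_sqrt (by norm_num)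
    linarith
  -- rewrite the solution operator
  have hEh : LocallyIntegrable (fun t => Real.exp (A t) * h t) volume :=
    locallyIntegrable_continuous_mul (Real.continuous_exp.comp hAcont)
      (hh.locallyIntegrable (by norm_num))
  set F : ℝ → ℝ := fun s => ∫ t in (0:ℝ)..s, Real.exp (A t) * h t with hFdef
  have hFint : ∀ p q : ℝ, IntervalIntegrable (fun t => Real.exp (A t) * h t) volume p q :=
    fun p q => (hEh.integrableOn_isCompact isCompact_uIcc).intervalIntegrable
  have hFcont : Continuous F := intervalIntegral.continuous_primitive hFint 0
  have hw1 : Sop h w₀ = fun s => Real.exp (-A s) * F s := by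
    funext s
    unfold Sop
    have hpt : ∀ t : ℝ, Real.exp (-(∫ τ in t..s, (2 * Real.tanh τ + w₀ τ))) * h t
        = Real.exp (-A s) * (Real.exp (A t) * h t) := by
      intro t
      have h5 : (∫ τ in t..s, (2 * Real.tanh τ + w₀ τ)) = A s - A t := hsplit t s
      rw [h5, show -(A s - A t) = A t + -A s by ring, Real.exp_add]
      ring
    rw [intervalIntegral.integral_congr (g := fun t => Real.exp (-A s) * (Real.exp (A t) * h t))
      (fun t _ => hpt t)]
    rw [intervalIntegral.integral_const_mul]
  rw [hw1]
  set w₁ : ℝ → ℝ := fun s => Real.exp (-A s) * F s with hw₁def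
  have hw₁cont : Continuous w₁ := (Real.continuous_exp.comp hAcont.neg).mul hFcont
  -- the comparison function u (a convolution)
  set u : ℝ → ℝ := fun s => ∫ t : ℝ, h t ^ 2 * Real.exp (-|s - t|) with hudef
  have hueq : u = convolution (fun t => h t ^ 2) (fun x => Real.exp (-|x|))
      (ContinuousLinearMap.mul ℝ ℝ) volume := by
    funext s
    rw [convolution_def]
    simp [hudef, ContinuousLinearMap.mul_apply']
  have hu_int : Integrable u volume := by
    rw [hueq]
    exact hsq.integrable_convolution _ integrable_exp_neg_abs
  have hu_total : ∫ s : ℝ, u s = 2 * N ^ 2 := by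
    rw [hueq, integral_convolution (ContinuousLinearMap.mul ℝ ℝ) hsq integrable_exp_neg_abs]
    simp only [ContinuousLinearMap.mul_apply']
    rw [hinth2, integral_exp_neg_abs]
    ring
  have hexp_cont : ∀ s : ℝ, Continuous (fun t : ℝ => Real.exp (-|s - t|)) := fun s =>
    Real.continuous_exp.comp (continuous_const.sub continuous_id).abs.neg
  have hexp_le_one : ∀ s t : ℝ, Real.exp (-|s - t|) ≤ 1 := by
    intro s t
    rw [show (1:ℝ) = Real.exp 0 by simp]
    exact Real.exp_le_exp.mpr (by simp [abs_nonneg])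
  have hexp_s : ∀ s : ℝ, Integrable (fun t => Real.exp (-|s - t|)) volume := fun s =>
    integrable_exp_neg_abs.comp_sub_left s
  have hexp_s_int : ∀ s : ℝ, ∫ t : ℝ, Real.exp (-|s - t|) = 2 := fun s => by
    rw [integral_sub_left_eq_self (fun t => Real.exp (-|t|)) volume s, integral_exp_neg_abs]
  have hu_sect : ∀ s : ℝ, Integrable (fun t => h t ^ 2 * Real.exp (-|s - t|)) volume := by
    intro s
    apply hsq.mono' (hsq.1.mul (hexp_cont s).aestronglyMeasurable)
    filter_upwards with t
    show ‖h t ^ 2 * Real.exp (-|s - t|)‖ ≤ h t ^ 2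
    rw [Real.norm_eq_abs, abs_mul, abs_of_nonneg (sq_nonneg _),
      abs_of_nonneg (Real.exp_pos _).le]
    calc h t ^ 2 * Real.exp (-|s - t|) ≤ h t ^ 2 * 1 :=
          mul_le_mul_of_nonneg_left (hexp_le_one s t) (sq_nonneg _)
      _ = h t ^ 2 := mul_one _
  have hu_nonneg : ∀ s, 0 ≤ u s := fun s =>
    integral_nonneg fun t => mul_nonneg (sq_nonneg _) (Real.exp_pos _).le
  have hu_le : ∀ s, u s ≤ N ^ 2 := by
    intro s
    rw [← hinth2]
    apply integral_mono (hu_sect s) hsq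
    intro t
    calc h t ^ 2 * Real.exp (-|s - t|) ≤ h t ^ 2 * 1 :=
          mul_le_mul_of_nonneg_left (hexp_le_one s t) (sq_nonneg _)
      _ = h t ^ 2 := mul_one _
  have hu_pos : ∀ s, 0 < u s := by
    intro s
    rcases (hu_nonneg s).lt_or_eq with hlt | heq
    · exact hlt
    · exfalso
      have h0 : (fun t => h t ^ 2 * Real.exp (-|s - t|)) =ᵐ[volume] 0 := by
        rw [← integral_eq_zero_iff_of_nonneg
          (fun t => mul_nonneg (sq_nonneg _) (Real.exp_pos _).le) (hu_sect s)]
        exact heq.symm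
      have hsq0 : (fun t => h t ^ 2) =ᵐ[volume] 0 := by
        filter_upwards [h0] with t ht
        have hzero : h t = 0 := by simpa using ht
        simp [hzero]
      have hz : ∫ t : ℝ, h t ^ 2 = 0 := by
        rw [integral_congr_ae hsq0]; simp
      rw [hinth2] at hz
      exact pow_ne_zero 2 hNpos.ne' hz
  -- integrability of the weighted |h|
  have habs_int : ∀ s : ℝ, Integrable (fun t => Real.exp (-|s - t|) * |h t|) volume := by
    intro s
    apply Integrable.mono' (((hexp_s s).add hsq).div_const 2)
      ((hexp_cont s).aestronglyMeasurable.mul hh.1.norm)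
    filter_upwards with t
    show ‖Real.exp (-|s - t|) * |h t|‖ ≤ (Real.exp (-|s - t|) + h t ^ 2) / 2
    rw [Real.norm_eq_abs, abs_of_nonneg (mul_nonneg (Real.exp_pos _).le (abs_nonneg _))]
    have he1 := hexp_le_one s t
    have he0 : 0 < Real.exp (-|s - t|) := Real.exp_pos _
    nlinarith [sq_nonneg (Real.exp (-|s - t|) - |h t|), sq_abs (h t), abs_nonneg (h t)]
  -- Cauchy-Schwarz-type bound for the weighted integral of |h|
  have hCS : ∀ s : ℝ, ∫ t : ℝ, Real.exp (-|s - t|) * |h t| ≤ Real.sqrt (2 * u s) := by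
    intro s
    set lam : ℝ := Real.sqrt (u s / 2) with hlamdef
    have hlam : 0 < lam := Real.sqrt_pos.mpr (by linarith [hu_pos s])
    have hlamsq : lam ^ 2 = u s / 2 := Real.sq_sqrt (by linarith [hu_pos s])
    have hmain : ∫ t : ℝ, (2 * lam) * (Real.exp (-|s - t|) * |h t|)
        ≤ ∫ t : ℝ, (lam ^ 2 * Real.exp (-|s - t|) + h t ^ 2 * Real.exp (-|s - t|)) := by
      apply integral_mono ((habs_int s).const_mul _)
        (by exact ((hexp_s s).const_mul _).add (hu_sect s))
      intro t
      simp only [Pi.add_apply]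
      have he0 : (0:ℝ) < Real.exp (-|s - t|) := Real.exp_pos _
      nlinarith [mul_nonneg he0.le (sq_nonneg (lam - |h t|)), sq_abs (h t)]
    have hadd2 : ∫ t : ℝ, (lam ^ 2 * Real.exp (-|s - t|) + h t ^ 2 * Real.exp (-|s - t|))
        = (∫ t : ℝ, lam ^ 2 * Real.exp (-|s - t|)) + ∫ t : ℝ, h t ^ 2 * Real.exp (-|s - t|) :=
      MeasureTheory.integral_add (by exact (hexp_s s).const_mul _) (hu_sect s)
    rw [MeasureTheory.integral_const_mul, hadd2, MeasureTheory.integral_const_mul,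
      hexp_s_int s] at hmain
    have husval : (∫ t : ℝ, h t ^ 2 * Real.exp (-|s - t|)) = u s := rfl
    rw [husval] at hmain
    have hgoal : ∫ t : ℝ, Real.exp (-|s - t|) * |h t| ≤ 2 * lam := by
      have hq : lam ^ 2 * 2 + u s = (2 * lam) * (2 * lam) := by nlinarith [hlamsq]
      rw [hq] at hmain
      exact le_of_mul_le_mul_left hmain (by linarith)
    have hsq2 : Real.sqrt (2 * u s) = 2 * lam := by
      rw [show 2 * u s = (2 * lam) ^ 2 by nlinarith [hlamsq]]
      exact Real.sqrt_sq (by linarith)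
    rw [hsq2]
    exact hgoal
  -- the kernel bound
  have hker : ∀ s t : ℝ, t ∈ Set.uIcc 0 s →
      Real.exp (-(A s - A t)) ≤ M * Real.exp (-|s - t|) := by
    intro s t ht
    have habs : |t| ≤ |s| ∧ |s - t| = |s| - |t| := by
      rcases le_total 0 s with hs | hs
      · rw [Set.uIcc_of_le hs] at ht
        obtain ⟨ht1, ht2⟩ := ht
        rw [abs_of_nonneg ht1, abs_of_nonneg hs, abs_of_nonneg (by linarith)]
        exact ⟨ht2, by ring⟩
      · rw [Set.uIcc_of_ge hs] at ht
        obtain ⟨ht1, ht2⟩ := ht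
        rw [abs_of_nonpos ht2, abs_of_nonpos hs, abs_of_nonpos (by linarith)]
        exact ⟨by linarith, by ring⟩
    obtain ⟨habs1, habs2⟩ := habs
    have hlogcosh : ∀ x : ℝ, HasDerivAt (fun y => Real.log (Real.cosh y)) (Real.tanh x) x := by
      intro x
      have hc := (Real.hasDerivAt_cosh x).log (Real.cosh_pos x).ne'
      simpa [Real.tanh_eq_sinh_div_cosh] using hc
    have htanh_int : ∫ τ in t..s, Real.tanh τ
        = Real.log (Real.cosh s) - Real.log (Real.cosh t) :=
      intervalIntegral.integral_eq_sub_of_hasDerivAt (fun x _ => hlogcosh x)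
        (htanh_cont.intervalIntegrable t s)
    have hw0b : |∫ τ in t..s, w₀ τ| ≤ 1 + |s - t| / 2 := by
      have hw₀loc : LocallyIntegrable w₀ volume := hw₀2.locallyIntegrable (by norm_num)
      have hIioc : Set.uIoc t s ⊆ Set.uIcc t s := Set.Ioc_subset_Icc_self
      have hw₀abs_int : IntegrableOn (fun τ => |w₀ τ|) (Set.uIoc t s) volume :=
        ((hw₀loc.integrableOn_isCompact isCompact_uIcc).mono_set hIioc).norm
      have hvolu : volume (Set.uIoc t s) < ⊤ := by
        rw [Set.uIoc, Real.volume_Ioc]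
        exact ENNReal.ofReal_lt_top
      have hrhs_int : IntegrableOn (fun τ => (w₀ τ ^ 2 + 1) / 2) (Set.uIoc t s) volume :=
        ((hw₀sq.integrableOn).add (integrableOn_const hvolu.ne)).div_const 2
      have hb1 : |∫ τ in t..s, w₀ τ| ≤ ∫ τ in Set.uIoc t s, |w₀ τ| := by
        rw [← Real.norm_eq_abs]
        exact le_trans intervalIntegral.norm_integral_le_integral_norm_uIoc (le_of_eq rfl)
      have hb2 : ∫ τ in Set.uIoc t s, |w₀ τ| ≤ ∫ τ in Set.uIoc t s, (w₀ τ ^ 2 + 1) / 2 := by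
        apply setIntegral_mono_on hw₀abs_int hrhs_int measurableSet_uIoc
        intro τ _
        nlinarith [sq_nonneg (|w₀ τ| - 1), sq_abs (w₀ τ)]
      have hb3 : ∫ τ in Set.uIoc t s, (w₀ τ ^ 2 + 1) / 2
          = ((∫ τ in Set.uIoc t s, w₀ τ ^ 2) + (volume (Set.uIoc t s)).toReal) / 2 := by
        rw [MeasureTheory.integral_div]
        congr 1
        rw [MeasureTheory.integral_add hw₀sq.integrableOn (integrableOn_const hvolu.ne)]
        congr 1
        rw [setIntegral_const, measureReal_def]
        simp
      have hb4 : ∫ τ in Set.uIoc t s, w₀ τ ^ 2 ≤ 2 :=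
        le_trans (setIntegral_le_integral hw₀sq
          (Filter.Eventually.of_forall fun τ => sq_nonneg _)) hw₀L2
      have hb5 : (volume (Set.uIoc t s)).toReal = |s - t| := by
        rw [Set.uIoc, Real.volume_Ioc, ENNReal.toReal_ofReal (by
          rw [← max_sub_min_eq_abs] at *
          rcases le_total t s with h' | h' <;>
            simp [min_eq_left, max_eq_right, min_eq_right, max_eq_left, h'] <;> linarith)]
        rw [max_sub_min_eq_abs, abs_sub_comm]
      calc |∫ τ in t..s, w₀ τ| ≤ ∫ τ in Set.uIoc t s, (w₀ τ ^ 2 + 1) / 2 := le_trans hb1 hb2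
        _ = ((∫ τ in Set.uIoc t s, w₀ τ ^ 2) + (volume (Set.uIoc t s)).toReal) / 2 := hb3
        _ ≤ (2 + |s - t|) / 2 := by rw [hb5]; linarith [hb4]
        _ = 1 + |s - t| / 2 := by ring
    have hcosh : Real.cosh t ≤ 2 * Real.exp (-|s - t|) * Real.cosh s := by
      have hct : Real.cosh t ≤ Real.exp |t| := by
        rw [Real.cosh_eq]
        have e1 : Real.exp t ≤ Real.exp |t| := Real.exp_le_exp.mpr (le_abs_self t)
        have e2 : Real.exp (-t) ≤ Real.exp |t| := Real.exp_le_exp.mpr (neg_le_abs t)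
        linarith
      have hcs : Real.exp |s| ≤ 2 * Real.cosh s := by
        rw [Real.cosh_eq]
        rcases le_total 0 s with hs | hs
        · rw [abs_of_nonneg hs]
          have := (Real.exp_pos (-s)).le
          linarith
        · rw [abs_of_nonpos hs]
          have := (Real.exp_pos s).le
          linarith
      calc Real.cosh t ≤ Real.exp |t| := hct
        _ = Real.exp |s| * Real.exp (-|s - t|) := by
            rw [← Real.exp_add]
            congr 1
            rw [habs2]
            ring
        _ ≤ (2 * Real.cosh s) * Real.exp (-|s - t|) :=
            mul_le_mul_of_nonneg_right hcs (Real.exp_pos _).le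
        _ = 2 * Real.exp (-|s - t|) * Real.cosh s := by ring
    have hsplit2 : A s - A t
        = 2 * (Real.log (Real.cosh s) - Real.log (Real.cosh t)) + ∫ τ in t..s, w₀ τ := by
      rw [← hsplit t s, hadef]
      beta_reduce
      rw [intervalIntegral.integral_add (f := fun τ => 2 * Real.tanh τ)
        ((continuous_const.mul htanh_cont).intervalIntegrable t s)
        (hw₀d.continuous.intervalIntegrable t s)]
      rw [intervalIntegral.integral_const_mul, htanh_int]
    have hexp_eq : Real.exp (-(A s - A t))
        = (Real.cosh t / Real.cosh s) ^ 2 * Real.exp (-(∫ τ in t..s, w₀ τ)) := by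
      rw [hsplit2, neg_add, Real.exp_add]
      congr 1
      rw [show -(2 * (Real.log (Real.cosh s) - Real.log (Real.cosh t)))
        = 2 * Real.log (Real.cosh t) - 2 * Real.log (Real.cosh s) by ring]
      rw [Real.exp_sub]
      rw [show (2:ℝ) * Real.log (Real.cosh t) = Real.log (Real.cosh t) + Real.log (Real.cosh t)
        by ring, Real.exp_add, Real.exp_log (Real.cosh_pos t)]
      rw [show (2:ℝ) * Real.log (Real.cosh s) = Real.log (Real.cosh s) + Real.log (Real.cosh s)
        by ring, Real.exp_add, Real.exp_log (Real.cosh_pos s)]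
      rw [div_pow]
      ring
    rw [hexp_eq]
    have hratio : (Real.cosh t / Real.cosh s) ^ 2 ≤ (2 * Real.exp (-|s - t|)) ^ 2 := by
      apply pow_le_pow_left₀ (div_nonneg (Real.cosh_pos t).le (Real.cosh_pos s).le)
      rw [div_le_iff₀ (Real.cosh_pos s)]
      linarith [hcosh]
    have hw0exp : Real.exp (-(∫ τ in t..s, w₀ τ)) ≤ Real.exp (1 + |s - t| / 2) := by
      apply Real.exp_le_exp.mpr
      have habs' := abs_le.mp hw0b
      linarith [habs'.1]
    calc (Real.cosh t / Real.cosh s) ^ 2 * Real.exp (-(∫ τ in t..s, w₀ τ))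
        ≤ (2 * Real.exp (-|s - t|)) ^ 2 * Real.exp (1 + |s - t| / 2) :=
          mul_le_mul hratio hw0exp (Real.exp_pos _).le (by positivity)
      _ = 4 * Real.exp (-|s - t| + -|s - t| + (1 + |s - t| / 2)) := by
          rw [show (4:ℝ) * Real.exp (-|s - t| + -|s - t| + (1 + |s - t| / 2))
            = 4 * (Real.exp (-|s - t|) * Real.exp (-|s - t|) * Real.exp (1 + |s - t| / 2)) by
              rw [Real.exp_add, Real.exp_add]]
          ring
      _ ≤ 4 * Real.exp (-|s - t| + 1) := by
          apply mul_le_mul_of_nonneg_left _ (by norm_num)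
          apply Real.exp_le_exp.mpr
          have habs0 : (0:ℝ) ≤ |s - t| := abs_nonneg _
          linarith
      _ = M * Real.exp (-|s - t|) := by
          rw [hMdef, Real.exp_add]
          ring
  -- pointwise bound for w₁
  have hptw : ∀ s : ℝ, |w₁ s| ≤ M * Real.sqrt (2 * u s) := by
    intro s
    have hcker : Continuous (fun t => Real.exp (-(A s - A t))) :=
      Real.continuous_exp.comp ((continuous_const.sub hAcont).neg)
    have hw1s : w₁ s = ∫ t in (0:ℝ)..s, Real.exp (-(A s - A t)) * h t := by
      have hpt2 : ∀ t : ℝ, Real.exp (-(A s - A t)) * h t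
          = Real.exp (-A s) * (Real.exp (A t) * h t) := by
        intro t
        rw [show -(A s - A t) = A t + -A s by ring, Real.exp_add]
        ring
      have hcongr : ∫ t in (0:ℝ)..s, Real.exp (-(A s - A t)) * h t
          = ∫ t in (0:ℝ)..s, Real.exp (-A s) * (Real.exp (A t) * h t) :=
        intervalIntegral.integral_congr (fun t _ => hpt2 t)
      rw [hcongr, intervalIntegral.integral_const_mul]
    rw [hw1s]
    have hIsub : Set.uIoc 0 s ⊆ Set.uIcc 0 s := Set.Ioc_subset_Icc_self
    calc |∫ t in (0:ℝ)..s, Real.exp (-(A s - A t)) * h t|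
        ≤ ∫ t in Set.uIoc 0 s, ‖Real.exp (-(A s - A t)) * h t‖ := by
          rw [← Real.norm_eq_abs]
          exact intervalIntegral.norm_integral_le_integral_norm_uIoc
      _ ≤ ∫ t in Set.uIoc 0 s, M * (Real.exp (-|s - t|) * |h t|) := by
          apply setIntegral_mono_on
          · exact (((locallyIntegrable_continuous_mul hcker
              (hh.locallyIntegrable (by norm_num))).integrableOn_isCompact
                isCompact_uIcc).mono_set hIsub).norm
          · exact ((habs_int s).const_mul M).integrableOn
          · exact measurableSet_uIoc
          · intro t htmem
            rw [Real.norm_eq_abs, abs_mul, abs_of_nonneg (Real.exp_pos _).le]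
            rw [show M * (Real.exp (-|s - t|) * |h t|) = (M * Real.exp (-|s - t|)) * |h t|
              by ring]
            exact mul_le_mul_of_nonneg_right (hker s t (hIsub htmem)) (abs_nonneg _)
      _ ≤ ∫ t : ℝ, M * (Real.exp (-|s - t|) * |h t|) := by
          apply setIntegral_le_integral ((habs_int s).const_mul M)
          filter_upwards with t
          positivity
      _ = M * ∫ t : ℝ, Real.exp (-|s - t|) * |h t| := MeasureTheory.integral_const_mul M _
      _ ≤ M * Real.sqrt (2 * u s) := mul_le_mul_of_nonneg_left (hCS s) hM0.le
  -- uniform and square bounds for w₁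
  have hsup : ∀ s : ℝ, |w₁ s| ≤ M * (Real.sqrt 2 * N) := by
    intro s
    apply le_trans (hptw s)
    apply mul_le_mul_of_nonneg_left _ hM0.le
    rw [show Real.sqrt 2 * N = Real.sqrt (2 * N ^ 2) by
      rw [Real.sqrt_mul (by norm_num), Real.sqrt_sq hN0]]
    exact Real.sqrt_le_sqrt (by nlinarith [hu_le s])
  have hsq1 : ∀ s : ℝ, w₁ s ^ 2 ≤ M ^ 2 * 2 * u s := by
    intro s
    have h1 : w₁ s ^ 2 = |w₁ s| ^ 2 := (sq_abs _).symm
    have h2 : |w₁ s| ^ 2 ≤ (M * Real.sqrt (2 * u s)) ^ 2 :=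
      pow_le_pow_left₀ (abs_nonneg _) (hptw s) 2
    have h3 : (M * Real.sqrt (2 * u s)) ^ 2 = M ^ 2 * 2 * u s := by
      rw [mul_pow, Real.sq_sqrt (by positivity : (0:ℝ) ≤ 2 * u s)]
      ring
    rw [h1, ← h3]
    exact h2
  have hw1sqbd : ∀ s : ℝ, w₁ s ^ 2 ≤ 2 * M ^ 2 * N ^ 2 := by
    intro s
    calc w₁ s ^ 2 ≤ M ^ 2 * 2 * u s := hsq1 s
      _ ≤ M ^ 2 * 2 * N ^ 2 := by
          apply mul_le_mul_of_nonneg_left (hu_le s) (by positivity)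
      _ = 2 * M ^ 2 * N ^ 2 := by ring
  have hw1sq_int : Integrable (fun s => w₁ s ^ 2) volume := by
    apply Integrable.mono' (hu_int.const_mul (M ^ 2 * 2)) (hw₁cont.pow 2).aestronglyMeasurable
    filter_upwards with s
    rw [Real.norm_eq_abs, abs_of_nonneg (sq_nonneg _)]
    exact hsq1 s
  have hw1sq_val : ∫ s : ℝ, w₁ s ^ 2 ≤ 4 * M ^ 2 * N ^ 2 := by
    calc ∫ s : ℝ, w₁ s ^ 2 ≤ ∫ s : ℝ, M ^ 2 * 2 * u s :=
          integral_mono hw1sq_int (hu_int.const_mul _) hsq1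
      _ = M ^ 2 * 2 * ∫ s : ℝ, u s := MeasureTheory.integral_const_mul _ _
      _ = 4 * M ^ 2 * N ^ 2 := by rw [hu_total]; ring
  have hw1mem : MemLp w₁ 2 volume :=
    (memLp_two_iff_integrable_sq hw₁cont.aestronglyMeasurable).2 hw1sq_int
  -- the a.e. derivative
  have hFder := ae_hasDerivAt_primitive hEh
  have hw1der : ∀ᵐ s : ℝ, HasDerivAt w₁ (h s - a s * w₁ s) s := by
    filter_upwards [hFder] with s hFs
    have h1 : HasDerivAt (fun x => Real.exp (-A x)) (Real.exp (-A s) * -(a s)) s :=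
      ((hAder s).neg).exp
    have h2 := h1.mul hFs
    have hval : Real.exp (-A s) * -(a s) * F s + Real.exp (-A s) * (Real.exp (A s) * h s)
        = h s - a s * w₁ s := by
      have h3 : Real.exp (-A s) * Real.exp (A s) = 1 := by
        rw [← Real.exp_add]; simp
      have h4 : Real.exp (-A s) * (Real.exp (A s) * h s) = h s := by
        rw [← mul_assoc, h3, one_mul]
      rw [h4, hw₁def]
      ring
    rw [hval] at h2
    exact h2
  have hderiv_ae : deriv w₁ =ᵐ[volume] fun s => h s - a s * w₁ s := by
    filter_upwards [hw1der] with s hs using hs.deriv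
  -- the function φ = h - a·w₁ and its L² bound
  set φ : ℝ → ℝ := fun s => h s - a s * w₁ s with hφdef
  have hφaesm : AEStronglyMeasurable φ volume :=
    hh.1.sub (ha.aestronglyMeasurable.mul hw₁cont.aestronglyMeasurable)
  have htanhsq : ∀ x : ℝ, Real.tanh x ^ 2 ≤ 1 := by
    intro x
    rw [Real.tanh_eq_sinh_div_cosh, div_pow, div_le_one (pow_pos (Real.cosh_pos x) 2)]
    nlinarith [Real.cosh_sq x]
  have hφsq_pt : ∀ s : ℝ, φ s ^ 2
      ≤ 3 * h s ^ 2 + 12 * w₁ s ^ 2 + 6 * M ^ 2 * N ^ 2 * w₀ s ^ 2 := by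
    intro s
    have hφs : φ s = h s - 2 * Real.tanh s * w₁ s - w₀ s * w₁ s := by
      rw [hφdef, hadef]
      ring
    rw [hφs]
    nlinarith [sq_nonneg (h s + 2 * Real.tanh s * w₁ s),
      sq_nonneg (h s + w₀ s * w₁ s),
      sq_nonneg (2 * Real.tanh s * w₁ s - w₀ s * w₁ s),
      mul_nonneg (sub_nonneg.2 (htanhsq s)) (sq_nonneg (w₁ s)),
      mul_nonneg (sub_nonneg.2 (hw1sqbd s)) (sq_nonneg (w₀ s)),
      sq_nonneg (w₀ s), sq_nonneg (w₁ s), sq_nonneg (h s)]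
  have hD_int : Integrable
      (fun s => 3 * h s ^ 2 + 12 * w₁ s ^ 2 + 6 * M ^ 2 * N ^ 2 * w₀ s ^ 2) volume :=
    ((hsq.const_mul 3).add (hw1sq_int.const_mul 12)).add (hw₀sq.const_mul _)
  have hφsq_aesm : AEStronglyMeasurable (fun s => φ s ^ 2) volume := by
    have : (fun s => φ s ^ 2) = fun s => φ s * φ s := by
      funext s; ring
    rw [this]
    exact hφaesm.mul hφaesm
  have hφsq_int : Integrable (fun s => φ s ^ 2) volume := by
    apply Integrable.mono' hD_int hφsq_aesm
    filter_upwards with s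
    rw [Real.norm_eq_abs, abs_of_nonneg (sq_nonneg _)]
    exact hφsq_pt s
  have hφmem : MemLp φ 2 volume := (memLp_two_iff_integrable_sq hφaesm).2 hφsq_int
  have hdmem : MemLp (deriv w₁) 2 volume := hφmem.ae_eq hderiv_ae.symm
  have hφsq_val : ∫ s : ℝ, φ s ^ 2 ≤ 3 * N ^ 2 + 60 * M ^ 2 * N ^ 2 := by
    calc ∫ s : ℝ, φ s ^ 2
        ≤ ∫ s : ℝ, (3 * h s ^ 2 + 12 * w₁ s ^ 2 + 6 * M ^ 2 * N ^ 2 * w₀ s ^ 2) :=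
          integral_mono hφsq_int hD_int hφsq_pt
      _ = 3 * (∫ s : ℝ, h s ^ 2) + 12 * (∫ s : ℝ, w₁ s ^ 2)
          + 6 * M ^ 2 * N ^ 2 * ∫ s : ℝ, w₀ s ^ 2 := by
          have e1 : ∫ s : ℝ, (3 * h s ^ 2 + 12 * w₁ s ^ 2 + 6 * M ^ 2 * N ^ 2 * w₀ s ^ 2)
              = (∫ s : ℝ, (3 * h s ^ 2 + 12 * w₁ s ^ 2)) + ∫ s : ℝ, 6 * M ^ 2 * N ^ 2 * w₀ s ^ 2 :=
            MeasureTheory.integral_add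
              (by exact (hsq.const_mul 3).add (hw1sq_int.const_mul 12))
              (by exact hw₀sq.const_mul _)
          have e2 : ∫ s : ℝ, (3 * h s ^ 2 + 12 * w₁ s ^ 2)
              = (∫ s : ℝ, 3 * h s ^ 2) + ∫ s : ℝ, 12 * w₁ s ^ 2 :=
            MeasureTheory.integral_add (by exact hsq.const_mul 3)
              (by exact hw1sq_int.const_mul 12)
          rw [e1, e2, MeasureTheory.integral_const_mul, MeasureTheory.integral_const_mul,
            MeasureTheory.integral_const_mul]
      _ ≤ 3 * N ^ 2 + 12 * (4 * M ^ 2 * N ^ 2) + 6 * M ^ 2 * N ^ 2 * 2 := by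
          have e1 : ∫ s : ℝ, h s ^ 2 = N ^ 2 := hinth2
          rw [e1]
          have e2 := hw1sq_val
          have e3 := hw₀L2
          have : (0:ℝ) ≤ 6 * M ^ 2 * N ^ 2 := by positivity
          nlinarith [this]
      _ = 3 * N ^ 2 + 60 * M ^ 2 * N ^ 2 := by ring
  -- conclusion
  refine ⟨hw1mem, hdmem, ?_⟩
  have hdsq_eq : ∫ s : ℝ, deriv w₁ s ^ 2 = ∫ s : ℝ, φ s ^ 2 := by
    apply integral_congr_ae
    filter_upwards [hderiv_ae] with s hs
    rw [hs]
  unfold H1norm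
  have hsum : (∫ s : ℝ, w₁ s ^ 2) + ∫ s : ℝ, deriv w₁ s ^ 2 ≤ (C * N) ^ 2 := by
    rw [hdsq_eq]
    have hCM : C = 9 * M := by rw [hCdef, hMdef]; ring
    have : (C * N) ^ 2 = 81 * M ^ 2 * N ^ 2 := by rw [hCM]; ring
    rw [this]
    nlinarith [hw1sq_val, hφsq_val, hM1, sq_nonneg N, sq_nonneg M,
      mul_nonneg (mul_nonneg (by linarith : (0:ℝ) ≤ M - 1) (by linarith : (0:ℝ) ≤ M + 1))
        (sq_nonneg N)]
  have hlt : Real.sqrt ((∫ s : ℝ, w₁ s ^ 2) + ∫ s : ℝ, deriv w₁ s ^ 2) < α :=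
    calc Real.sqrt ((∫ s : ℝ, w₁ s ^ 2) + ∫ s : ℝ, deriv w₁ s ^ 2)
        ≤ Real.sqrt ((C * N) ^ 2) := Real.sqrt_le_sqrt hsum
      _ = C * N := Real.sqrt_sq (by positivity)
      _ < α := by
          have hlt2 := (mul_lt_mul_iff_right₀ hC).2 hhN
          rwa [mul_div_cancel₀ α hC.ne'] at hlt2
  exact hlt.le
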